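/- There exists a bounded Borel function u : ℝ³ → ℝ such that the function x ↦ sup_{y ∈ closedBall(x,1)} u(y) is not Borel measurable. -/

import Mathlib

open MeasureTheory Metric Set

namespace BorelSupAux

abbrev NN := ℕ → ℕ

/-- Cylinder set determined by a finite list. -/
def cylList (s : List ℕ) : Set NN := {y | ∀ i : Fin s.length, y i = s.get i}

lemma isOpen_cylList (s : List ℕ) : IsOpen (cylList s) := by
  have : cylList s = ⋂ i : Fin s.length, (fun y : NN => y i) ⁻¹' {s.get i} := by
    ext y; simp [cylList]
  rw [this]
  exact isOpen_iInter_of_finite fun i =>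
    (continuous_apply (i : ℕ)).isOpen_preimage _ (isOpen_discrete _)

lemma cylinder_eq_cylList (x : NN) (n : ℕ) :
    PiNat.cylinder x n = cylList (List.ofFn fun i : Fin n => x i) := by
  ext y
  constructor
  · intro h i
    have hi : (i : ℕ) < n := by simpa using i.2
    simp [List.get_ofFn, h _ hi]
  · intro h i hi
    have := h ⟨i, by simpa using hi⟩
    simpa [List.get_ofFn] using this

noncomputable def enc : ℕ → List ℕ := Denumerable.ofNat (List ℕ)

lemma enc_surj : Function.Surjective enc :=
  fun s => ⟨Encodable.encode s, Denumerable.ofNat_encode s⟩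

/-- Universal open set. -/
def U : Set (NN × NN) := {p | ∃ n, p.1 n = 1 ∧ p.2 ∈ cylList (enc n)}

lemma isOpen_U : IsOpen U := by
  have : U = ⋃ n, ((fun a : NN => a n) ⁻¹' {1}) ×ˢ cylList (enc n) := by
    ext p; simp [U, Set.mem_prod]
  rw [this]
  exact isOpen_iUnion fun n =>
    (((continuous_apply n).isOpen_preimage _ (isOpen_discrete _))).prod (isOpen_cylList _)

/-- Universality of `U` for open sets. -/
lemma exists_section_eq_of_isOpen {O : Set NN} (hO : IsOpen O) :
    ∃ a : NN, {x | (a, x) ∈ U} = O := by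
  classical
  refine ⟨fun n => if cylList (enc n) ⊆ O then 1 else 0, ?_⟩
  ext x
  simp only [mem_setOf_eq, U]
  constructor
  · rintro ⟨n, hn, hx⟩
    by_cases h : cylList (enc n) ⊆ O
    · exact h hx
    · rw [if_neg h] at hn; exact absurd hn zero_ne_one
  · intro hx
    obtain ⟨v, ⟨z, n, rfl⟩, hxv, hvO⟩ :=
      (PiNat.isTopologicalBasis_cylinders (fun _ : ℕ => ℕ)).exists_subset_of_mem_open hx hO
    rw [cylinder_eq_cylList] at hxv hvO
    obtain ⟨m, hm⟩ := enc_surj (List.ofFn fun i : Fin n => z i)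
    refine ⟨m, ?_, ?_⟩
    · show (if cylList (enc m) ⊆ O then 1 else 0) = 1
      rw [hm]; exact if_pos hvO
    · rw [hm]; exact hxv

/-- Interleaving pairing on Baire space. -/
def pair (x y : NN) : NN := fun n => if n % 2 = 0 then x (n / 2) else y (n / 2)

lemma pair_even (x y : NN) (m : ℕ) : pair x y (2 * m) = x m := by
  simp [pair, Nat.mul_mod_right, Nat.mul_div_cancel_left _ (by norm_num : (0:ℕ) < 2)]

lemma pair_odd (x y : NN) (m : ℕ) : pair x y (2 * m + 1) = y m := by
  have h1 : (2 * m + 1) % 2 = 1 := by omega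
  have h2 : (2 * m + 1) / 2 = m := by omega
  simp [pair, h1, h2]

lemma continuous_pair : Continuous (fun p : NN × NN => pair p.1 p.2) := by
  apply continuous_pi
  intro n
  by_cases h : n % 2 = 0 <;> simp only [pair, h, if_true, if_false, reduceIte]
  · exact (continuous_apply _).comp continuous_fst
  · exact (continuous_apply _).comp continuous_snd

def unpair1 (z : NN) : NN := fun n => z (2 * n)
def unpair2 (z : NN) : NN := fun n => z (2 * n + 1)

lemma continuous_unpair1 : Continuous unpair1 := continuous_pi fun n => continuous_apply _
lemma continuous_unpair2 : Continuous unpair2 := continuous_pi fun n => continuous_apply _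

lemma unpair1_pair (x y : NN) : unpair1 (pair x y) = x := funext fun m => pair_even x y m
lemma unpair2_pair (x y : NN) : unpair2 (pair x y) = y := funext fun m => pair_odd x y m

/-- Universality of the complement of `U` for "projections of closed sets":
every analytic set in `NN` is of this form. -/
lemma exists_code_of_analyticSet {A : Set NN} (hA : AnalyticSet A) :
    ∃ a : NN, A = {x | ∃ y, (a, pair x y) ∉ U} := by
  rw [AnalyticSet_def] at hA
  rcases hA with rfl | ⟨f, hf, rfl⟩
  · obtain ⟨a, ha⟩ := exists_section_eq_of_isOpen (isOpen_univ (X := NN))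
    refine ⟨a, ?_⟩
    ext x
    simp only [mem_empty_iff_false, mem_setOf_eq, false_iff, not_exists, not_not]
    intro y
    have : pair x y ∈ {z | (a, z) ∈ U} := by rw [show {z : NN | (a, z) ∈ U} = univ from ha]; trivial
    exact this
  · -- A = range f ; closed set C' = {z | f (unpair2 z) = unpair1 z}
    have hC : IsClosed {z : NN | f (unpair2 z) = unpair1 z} :=
      isClosed_eq (hf.comp continuous_unpair2) continuous_unpair1
    obtain ⟨a, ha⟩ := exists_section_eq_of_isOpen hC.isOpen_compl
    refine ⟨a, ?_⟩
    ext x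
    simp only [mem_range, mem_setOf_eq]
    constructor
    · rintro ⟨y, rfl⟩
      refine ⟨y, fun hU => ?_⟩
      have : pair (f y) y ∈ {z : NN | f (unpair2 z) = unpair1 z}ᶜ := by
        rw [← ha]; exact hU
      exact this (by simp [unpair1_pair, unpair2_pair])
    · rintro ⟨y, hy⟩
      have : pair x y ∉ {z : NN | f (unpair2 z) = unpair1 z}ᶜ := by
        rw [← ha]; exact hy
      simp only [mem_compl_iff, mem_setOf_eq, not_not, unpair1_pair, unpair2_pair] at this
      exact ⟨y, this⟩

/-- The diagonal set: analytic but not Borel. -/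
def Ebad : Set (NN × NN) := {q | (q.1, pair q.1 q.2) ∉ U}

lemma isClosed_Ebad : IsClosed Ebad := by
  have : Ebad = (fun q : NN × NN => (q.1, pair q.1 q.2)) ⁻¹' Uᶜ := rfl
  rw [this]
  exact (isOpen_U.isClosed_compl).preimage
    (continuous_fst.prodMk (continuous_pair.comp (continuous_fst.prodMk continuous_snd)))

lemma not_measurableSet_fst_image_Ebad : ¬ MeasurableSet (Prod.fst '' Ebad) := by
  intro hD
  have hDc : AnalyticSet ((Prod.fst '' Ebad)ᶜ) := hD.compl.analyticSet
  obtain ⟨a, ha⟩ := exists_code_of_analyticSet hDc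
  have hiff : a ∈ (Prod.fst '' Ebad)ᶜ ↔ a ∈ Prod.fst '' Ebad := by
    rw [ha]
    simp only [mem_setOf_eq, Set.mem_image, Prod.exists]
    constructor
    · rintro ⟨y, hy⟩
      exact ⟨a, y, hy, rfl⟩
    · rintro ⟨x, y, hy, rfl⟩
      exact ⟨y, hy⟩
  simp only [mem_compl_iff] at hiff
  tauto

/-- A Borel subset of `ℝ × ℝ` with non-Borel first projection. -/
lemma exists_measurableSet_not_measurableSet_fst_image :
    ∃ P : Set (ℝ × ℝ), MeasurableSet P ∧ ¬ MeasurableSet (Prod.fst '' P) := by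
  obtain ⟨φ, hφ⟩ := exists_measurableEmbedding_real NN
  refine ⟨(fun q : NN × NN => (φ q.1, φ q.2)) '' Ebad, ?_, ?_⟩
  · exact (hφ.prodMap hφ).measurableSet_image.2 isClosed_Ebad.measurableSet
  · intro h
    apply not_measurableSet_fst_image_Ebad
    have himg : Prod.fst '' ((fun q : NN × NN => (φ q.1, φ q.2)) '' Ebad)
        = φ '' (Prod.fst '' Ebad) := by
      rw [← Set.image_comp, ← Set.image_comp]
      rfl
    rw [himg] at h
    have := hφ.measurable h
    rwa [Set.preimage_image_eq _ hφ.injective] at this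


noncomputable def theta (b : ℝ) : ℝ := 2 * Real.arctan b

lemma cos_theta (b : ℝ) : Real.cos (theta b) = (1 - b^2) / (1 + b^2) := by
  have h : (0:ℝ) < 1 + b^2 := by positivity
  rw [theta, Real.cos_two_mul, Real.cos_arctan]
  rw [div_pow, one_pow, Real.sq_sqrt h.le]
  field_simp
  ring

lemma sin_theta (b : ℝ) : Real.sin (theta b) = 2 * b / (1 + b^2) := by
  have h : (0:ℝ) < 1 + b^2 := by positivity
  rw [theta, Real.sin_two_mul, Real.sin_arctan, Real.cos_arctan]
  have hs0 : Real.sqrt (1 + b^2) ≠ 0 := by positivity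
  field_simp
  rw [Real.sq_sqrt h.le]

lemma theta_pair_inj {b b' : ℝ} (hc : Real.cos (theta b) = Real.cos (theta b'))
    (hs : Real.sin (theta b) = Real.sin (theta b')) : b = b' := by
  rw [cos_theta, cos_theta] at hc
  rw [sin_theta, sin_theta] at hs
  have h : (0:ℝ) < 1 + b^2 := by positivity
  have h' : (0:ℝ) < 1 + b'^2 := by positivity
  rw [div_eq_div_iff h.ne' h'.ne'] at hc hs
  have hb2 : b^2 = b'^2 := by nlinarith
  have hz : (b - b') * (2 + 2 * b^2) = 0 := by linear_combination hs + 2 * b * hb2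
  rcases mul_eq_zero.1 hz with h0 | h0
  · linarith
  · nlinarith

noncomputable def psi (p : ℝ × ℝ) : EuclideanSpace ℝ (Fin 3) :=
  (WithLp.equiv 2 (Fin 3 → ℝ)).symm ![p.1, Real.cos (theta p.2), Real.sin (theta p.2)]

noncomputable def xline (t : ℝ) : EuclideanSpace ℝ (Fin 3) :=
  (WithLp.equiv 2 (Fin 3 → ℝ)).symm ![t, 0, 0]

lemma continuous_psi : Continuous psi := by
  apply Continuous.comp (PiLp.continuous_toLp 2 (fun _ : Fin 3 => ℝ))
  apply continuous_pi
  intro i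
  fin_cases i
  · simpa using continuous_fst
  · simp; exact (Real.continuous_cos.comp
      ((continuous_const.mul Real.continuous_arctan).comp continuous_snd))
  · simp; exact (Real.continuous_sin.comp
      ((continuous_const.mul Real.continuous_arctan).comp continuous_snd))

lemma psi_injective : Function.Injective psi := by
  rintro ⟨a, b⟩ ⟨a', b'⟩ h
  have h0 := congrArg (fun v : EuclideanSpace ℝ (Fin 3) => v 0) h
  have h1 := congrArg (fun v : EuclideanSpace ℝ (Fin 3) => v 1) h
  have h2 := congrArg (fun v : EuclideanSpace ℝ (Fin 3) => v 2) h
  simp only [psi, WithLp.equiv_symm_apply, PiLp.toLp_apply, Matrix.cons_val_zero, Matrix.cons_val_one,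
    Matrix.head_cons, Matrix.cons_val_two, Matrix.tail_cons] at h0 h1 h2
  exact Prod.ext h0 (theta_pair_inj h1 h2)

lemma psi_mem_closedBall_iff (a b t : ℝ) :
    psi (a, b) ∈ Metric.closedBall (xline t) 1 ↔ a = t := by
  rw [Metric.mem_closedBall, EuclideanSpace.dist_eq]
  have hsum : ∑ i, dist (psi (a, b) i) (xline t i) ^ 2 = (a - t)^2 + 1 := by
    simp only [psi, xline, WithLp.equiv_symm_apply, PiLp.toLp_apply, Fin.sum_univ_three,
      Matrix.cons_val_zero, Matrix.cons_val_one, Matrix.head_cons, Matrix.cons_val_two,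
      Matrix.tail_cons, Real.dist_eq, sub_zero, sq_abs]
    linear_combination Real.cos_sq_add_sin_sq (theta b)
  rw [hsum]
  constructor
  · intro hle
    have h1 : (a - t)^2 + 1 ≤ 1 := by
      nlinarith [Real.sq_sqrt (show (0:ℝ) ≤ (a - t)^2 + 1 by positivity),
        Real.sqrt_nonneg ((a - t)^2 + 1), hle]
    have h2 : (a - t)^2 ≤ 0 := by linarith
    have h3 : a - t = 0 := by nlinarith [sq_nonneg (a - t)]
    linarith
  · rintro rfl
    simp

lemma xline_not_mem_image (t : ℝ) (Q : Set (ℝ × ℝ)) : xline t ∉ psi '' Q := by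
  rintro ⟨p, -, hp⟩
  have h1 := congrArg (fun v : EuclideanSpace ℝ (Fin 3) => v 1) hp
  have h2 := congrArg (fun v : EuclideanSpace ℝ (Fin 3) => v 2) hp
  simp only [psi, xline, WithLp.equiv_symm_apply, PiLp.toLp_apply, Matrix.cons_val_one, Matrix.head_cons,
    Matrix.cons_val_two, Matrix.tail_cons, Matrix.cons_val_zero] at h1 h2
  have := Real.cos_sq_add_sin_sq (theta p.2)
  rw [h1, h2] at this
  norm_num at this

lemma continuous_xline : Continuous xline := by
  apply Continuous.comp (PiLp.continuous_toLp 2 (fun _ : Fin 3 => ℝ))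
  apply continuous_pi
  intro i
  fin_cases i
  · simpa using continuous_id'
  · simpa using continuous_const
  · simpa using continuous_const

end BorelSupAux

open BorelSupAux

/-- There is a bounded Borel function `u : ℝ³ → ℝ` such that
`x ↦ sup_{closedBall(x,1)} u` is not Borel measurable. -/
theorem exists_borel_sup_closedBall_not_borel :
    ∃ u : EuclideanSpace ℝ (Fin 3) → ℝ,
      Measurable u ∧ (∃ C, ∀ x, |u x| ≤ C) ∧
      ¬ Measurable (fun x => sSup (u '' closedBall x 1)) := by
  obtain ⟨P, hP, hPproj⟩ := BorelSupAux.exists_measurableSet_not_measurableSet_fst_image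
  set S : Set (EuclideanSpace ℝ (Fin 3)) := psi '' P with hSdef
  have hSmeas : MeasurableSet S :=
    hP.image_of_continuousOn_injOn continuous_psi.continuousOn psi_injective.injOn
  set u : EuclideanSpace ℝ (Fin 3) → ℝ := S.indicator fun _ => 1 with hudef
  have hu01 : ∀ y, u y = 0 ∨ u y = 1 := by
    intro y
    by_cases hy : y ∈ S
    · right; simp [hudef, Set.indicator_of_mem hy]
    · left; simp [hudef, Set.indicator_of_notMem hy]
  have hu_xline : ∀ t, u (xline t) = 0 := fun t =>
    Set.indicator_of_notMem (xline_not_mem_image t P) _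
  -- the key computation of the sup over balls centered on the axis
  have key : ∀ t : ℝ, sSup (u '' closedBall (xline t) 1)
      = (Prod.fst '' P).indicator (fun _ => (1:ℝ)) t := by
    intro t
    have h0mem : (0:ℝ) ∈ u '' closedBall (xline t) 1 :=
      ⟨xline t, mem_closedBall_self zero_le_one, hu_xline t⟩
    by_cases ht : t ∈ Prod.fst '' P
    · -- image is {0, 1}
      obtain ⟨p, hpP, hpt⟩ := ht
      have hpsit : psi p ∈ closedBall (xline t) 1 := by
        have := (psi_mem_closedBall_iff p.1 p.2 t).2 hpt
        simpa using this
      have h1mem : (1:ℝ) ∈ u '' closedBall (xline t) 1 :=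
        ⟨psi p, hpsit, Set.indicator_of_mem (show psi p ∈ S from ⟨p, hpP, rfl⟩) _⟩
      have himg : u '' closedBall (xline t) 1 = {0, 1} := by
        apply Set.Subset.antisymm
        · rintro - ⟨y, -, rfl⟩
          rcases hu01 y with h | h <;> simp [h]
        · rintro r hr
          rcases hr with rfl | rfl
          exacts [h0mem, by simpa using h1mem]
      rw [himg]
      have : sSup ({0, 1} : Set ℝ) = 1 := by
        rw [csSup_pair]
        exact sup_eq_right.2 zero_le_one
      rw [this, Set.indicator_of_mem (show t ∈ Prod.fst '' P from ⟨p, hpP, hpt⟩)]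
    · -- image is {0}
      have himg : u '' closedBall (xline t) 1 = {0} := by
        apply Set.Subset.antisymm
        · rintro - ⟨y, hy, rfl⟩
          rcases hu01 y with h | h
          · simp [h]
          · exfalso
            have hyS : y ∈ S := by
              by_contra hyS
              rw [hudef] at h
              rw [Set.indicator_of_notMem hyS] at h
              exact zero_ne_one h
            obtain ⟨p, hpP, rfl⟩ := hyS
            have : p.1 = t := by
              have hb := (psi_mem_closedBall_iff p.1 p.2 t).1 (by simpa using hy)
              exact hb
            exact ht ⟨p, hpP, this⟩
        · rintro r rfl
          exact h0mem
      rw [himg, csSup_singleton, Set.indicator_of_notMem ht]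
  refine ⟨u, ?_, ⟨1, ?_⟩, ?_⟩
  · exact (measurable_const (a := (1:ℝ))).indicator hSmeas
  · intro x
    rcases hu01 x with h | h <;> simp [h]
  · intro hF
    have hg : Measurable fun t : ℝ => sSup (u '' closedBall (xline t) 1) :=
      hF.comp continuous_xline.measurable
    have hpre : MeasurableSet ((fun t : ℝ => sSup (u '' closedBall (xline t) 1)) ⁻¹' {1}) :=
      hg (measurableSet_singleton 1)
    have heq : ((fun t : ℝ => sSup (u '' closedBall (xline t) 1)) ⁻¹' {1}) = Prod.fst '' P := by
      ext t
      simp only [Set.mem_preimage, Set.mem_singleton_iff, key]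
      by_cases ht : t ∈ Prod.fst '' P
      · simp [Set.indicator_of_mem ht, ht]
      · simp [Set.indicator_of_notMem ht, ht]
    rw [heq] at hpre
    exact hPproj hpre
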